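/- If a decorated Gauss diagram is admissible (every nontrivial orientation-respecting loop has strictly positive homology class), then it has a positive refinement: an assignment of non-negative integers to its edges, not all zero, realizing all valuations, such that moreover every nontrivial orientation-respecting loop meets a positive edge. (It follows from weak admissibility giving a non-negative refinement, plus positivity of the circle's class forcing at least one positive marking.) -/

import Mathlib

/-- A Gauss diagram with `n` arrows: the `2n` arrow endpoints are the points of the cyclic group
`ZMod (2*n)` (listed in the cyclic order of the oriented circle), and arrow `a` points from its
underpass point `tail a` to its overpass point `head a`.  The edge `e` of the diagram is the arc
of the circle from the point `e` to the point `e + 1`. -/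
structure GaussDiagram (n : ℕ) where
  head : Fin n → ZMod (2 * n)
  tail : Fin n → ZMod (2 * n)
  inj : Function.Injective (Sum.elim head tail)

namespace GaussDiagram

variable {n : ℕ}

/-- The edge-characteristic vector of the distinguished loop of arrow `a`: it traverses the
edges from `head a` to `tail a` along the orientation of the circle (and returns along the
arrow). -/
def arcChain (G : GaussDiagram n) (a : Fin n) : ZMod (2 * n) → ℤ :=
  fun e => if (e - G.head a).val < (G.tail a - G.head a).val then 1 else 0

/-- The `(n+1) × 2n` matrix whose rows are the edge-characteristic vectors of the `n`
distinguished loops together with the full circle (the all-ones row, indexed by `none`). -/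
def loopMatrix (G : GaussDiagram n) : Matrix (Option (Fin n)) (ZMod (2 * n)) ℤ :=
  fun r e => r.elim 1 fun a => G.arcChain a e

/-- The elementary refinement move of type II+ at arrow `a`: add `+1` on the edge directly
following each endpoint of `a` and `-1` on the edge directly preceding it (with multiplicity). -/
def moveVec (G : GaussDiagram n) (a : Fin n) : ZMod (2 * n) → ℤ :=
  fun e => (if e = G.head a then 1 else 0) + (if e = G.tail a then 1 else 0)
    - (if e = G.head a - 1 then 1 else 0) - (if e = G.tail a - 1 then 1 else 0)

/-- The edge `e` (from point `e` to point `e+1`) is adjacent to the arrow `a` if one of its two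
boundary points is an endpoint of `a`. -/
def adjacent (G : GaussDiagram n) (e : ZMod (2 * n)) (a : Fin n) : Prop :=
  e = G.head a ∨ e + 1 = G.head a ∨ e = G.tail a ∨ e + 1 = G.tail a

end GaussDiagram

/-- A move of a loop in a Gauss diagram: either follow the next edge of the circle in the
direction of its orientation (`circ`), or jump along an arrow, in either direction. -/
inductive Move (n : ℕ) where
  | circ : Move n
  | jumpHT : Fin n → Move n
  | jumpTH : Fin n → Move n

/-- Whether a move is a jump along an arrow. -/
def Move.isJump {n : ℕ} : Move n → Prop
  | .circ => False
  | _ => True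

namespace GaussDiagram

/-- The point reached by performing one move starting at the point `p`. -/
def target (G : GaussDiagram n) (p : ZMod (2 * n)) : Move n → ZMod (2 * n)
  | .circ => p + 1
  | .jumpHT a => G.tail a
  | .jumpTH a => G.head a

/-- Validity of a sequence of moves starting at `p`: a jump along an arrow may only be performed
from an endpoint of that arrow. -/
def validFrom (G : GaussDiagram n) : ZMod (2 * n) → List (Move n) → Prop
  | _, [] => True
  | p, mv :: r =>
      (match mv with
        | .circ => True
        | .jumpHT a => p = G.head a
        | .jumpTH a => p = G.tail a) ∧ validFrom G (G.target p mv) r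

/-- The point reached after performing a sequence of moves from `p`. -/
def run (G : GaussDiagram n) : ZMod (2 * n) → List (Move n) → ZMod (2 * n)
  | p, [] => p
  | p, mv :: r => run G (G.target p mv) r

/-- A loop in the Gauss diagram which respects the orientation of the circle: a closed valid
sequence of moves (circle arcs are always traversed in the orientation direction, arrows may be
traversed both ways). -/
structure Loop (G : GaussDiagram n) where
  start : ZMod (2 * n)
  moves : List (Move n)
  valid : G.validFrom start moves
  closed : G.run start moves = start

/-- A loop is *reduced* (nontrivial) if it is nonempty and never backtracks: no two cyclically
consecutive moves are jumps (two consecutive jumps necessarily cancel along the same arrow). -/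
def Loop.Reduced {G : GaussDiagram n} (L : Loop G) : Prop :=
  L.moves ≠ [] ∧
  L.moves.Chain' (fun m₁ m₂ => ¬(m₁.isJump ∧ m₂.isJump)) ∧
  ∀ m₁ ∈ L.moves.getLast?, ∀ m₂ ∈ L.moves.head?, ¬(m₁.isJump ∧ m₂.isJump)

/-- Whether a sequence of moves from `p` meets a marking of the marking function `m` (which
records the number of (positive) markings on each edge). -/
def meetsFrom (G : GaussDiagram n) (m : ZMod (2 * n) → ℕ) :
    ZMod (2 * n) → List (Move n) → Prop
  | _, [] => False
  | p, .circ :: r => 0 < m p ∨ meetsFrom G m (p + 1) r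
  | _, .jumpHT a :: r => meetsFrom G m (G.tail a) r
  | _, .jumpTH a :: r => meetsFrom G m (G.head a) r

/-- A loop meets a marking if one of the circle arcs it traverses carries a marking. -/
def Loop.Meets {G : GaussDiagram n} (m : ZMod (2 * n) → ℕ) (L : Loop G) : Prop :=
  G.meetsFrom m L.start L.moves

/-- In the diagram obtained by deleting the arrows of `R`, the point `p` is directly preceded by
a marking: going backwards along the circle from `p` one finds a marking before meeting any
endpoint of a non-deleted arrow. -/
def precededBy (G : GaussDiagram n) (m : ZMod (2 * n) → ℕ) (R : Set (Fin n))
    (p : ZMod (2 * n)) : Prop :=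
  ∃ j : ℕ, 0 < m (p - 1 - (j : ZMod (2 * n))) ∧
    ∀ i < j, ∃ a ∈ R, G.head a = p - 1 - (i : ZMod (2 * n)) ∨
      G.tail a = p - 1 - (i : ZMod (2 * n))

/-- The set of arrows removed after `k` rounds of deleting the arrows of level `1` (those whose
two endpoints are both directly preceded by a marking in the current diagram). -/
def removedAt (G : GaussDiagram n) (m : ZMod (2 * n) → ℕ) : ℕ → Set (Fin n)
  | 0 => ∅
  | k + 1 => removedAt G m k ∪
      {a | G.precededBy m (removedAt G m k) (G.head a) ∧
           G.precededBy m (removedAt G m k) (G.tail a)}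

/-- An arrow has a well-defined level if it is eventually deleted in the level process. -/
def HasLevel (G : GaussDiagram n) (m : ZMod (2 * n) → ℕ) (a : Fin n) : Prop :=
  ∃ k, a ∈ G.removedAt m k

/-- The number of times a sequence of moves from `p` traverses each edge of the circle. -/
def edgeCount (G : GaussDiagram n) : ZMod (2 * n) → List (Move n) → ZMod (2 * n) → ℤ
  | _, [] => 0
  | p, .circ :: r => fun e => (if e = p then 1 else 0) + edgeCount G (p + 1) r e
  | _, .jumpHT a :: r => edgeCount G (G.tail a) r
  | _, .jumpTH a :: r => edgeCount G (G.head a) r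

/-- The net number of traversals of each arrow, counted positively in the tail-to-head
direction (the direction used by the distinguished loops). -/
def netJump {n : ℕ} : List (Move n) → Fin n → ℤ
  | [] => 0
  | .circ :: r => netJump r
  | .jumpHT a :: r => fun b => netJump r b - (if b = a then 1 else 0)
  | .jumpTH a :: r => fun b => (if b = a then 1 else 0) + netJump r b

/-- `y` is a refinement of the decorated Gauss diagram with arrow valuations `dA` and circle
valuation `d`: the sum of the markings along each distinguished loop is the corresponding
valuation, and the total sum is the valuation of the circle. -/
def IsRefinement [NeZero (2 * n)] (G : GaussDiagram n) (dA : Fin n → ℤ) (d : ℤ)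
    (y : ZMod (2 * n) → ℤ) : Prop :=
  (∀ a, ∑ e, G.arcChain a e * y e = dA a) ∧ ∑ e, y e = d

/-- The homology class in `H₁(ℝ × S¹) = ℤ` of a loop of the decorated Gauss diagram with arrow
valuations `dA` and circle valuation `d`, computed by expressing the cycle of the loop in the
basis formed by the distinguished loops and the circle. -/
def loopClass [NeZero (2 * n)] (G : GaussDiagram n) (dA : Fin n → ℤ) (d : ℤ)
    (L : Loop G) : ℤ :=
  ∑ a, netJump L.moves a * dA a +
    (G.edgeCount L.start L.moves 0 - ∑ a, netJump L.moves a * G.arcChain a 0) * d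

end GaussDiagram
namespace StrongAdm

open GaussDiagram

variable {n : ℕ}

/-- Validity of a single move from a point. -/
def mvValid (G : GaussDiagram n) (p : ZMod (2*n)) : Move n → Prop
  | .circ => True
  | .jumpHT a => p = G.head a
  | .jumpTH a => p = G.tail a

lemma validFrom_nil (G : GaussDiagram n) (p : ZMod (2*n)) : G.validFrom p [] := trivial

lemma validFrom_cons (G : GaussDiagram n) (p : ZMod (2*n)) (mv : Move n) (r : List (Move n)) :
    G.validFrom p (mv :: r) ↔ mvValid G p mv ∧ G.validFrom (G.target p mv) r := by
  cases mv <;> rfl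

lemma run_cons (G : GaussDiagram n) (p : ZMod (2*n)) (mv : Move n) (r : List (Move n)) :
    G.run p (mv :: r) = G.run (G.target p mv) r := rfl

lemma run_append (G : GaussDiagram n) (l₁ l₂ : List (Move n)) (p : ZMod (2*n)) :
    G.run p (l₁ ++ l₂) = G.run (G.run p l₁) l₂ := by
  induction l₁ generalizing p with
  | nil => rfl
  | cons m r ih => simp [run_cons, ih]

lemma validFrom_append (G : GaussDiagram n) (l₁ l₂ : List (Move n)) (p : ZMod (2*n)) :
    G.validFrom p (l₁ ++ l₂) ↔ G.validFrom p l₁ ∧ G.validFrom (G.run p l₁) l₂ := by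
  induction l₁ generalizing p with
  | nil => simp [validFrom_nil, GaussDiagram.run]
  | cons m r ih => simp [validFrom_cons, run_cons, ih, and_assoc]

/-- The weight of a single move. -/
def mw (G : GaussDiagram n) (dA : Fin n → ℤ) (d : ℤ) (p : ZMod (2*n)) : Move n → ℤ
  | .circ => if p = 0 then d else 0
  | .jumpHT a => -(dA a - d * G.arcChain a 0)
  | .jumpTH a => dA a - d * G.arcChain a 0

/-- The weight of a walk. -/
def wt (G : GaussDiagram n) (dA : Fin n → ℤ) (d : ℤ) : ZMod (2*n) → List (Move n) → ℤ
  | _, [] => 0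
  | p, mv :: r => mw G dA d p mv + wt G dA d (G.target p mv) r

lemma wt_nil (G : GaussDiagram n) (dA : Fin n → ℤ) (d : ℤ) (p : ZMod (2*n)) :
    wt G dA d p [] = 0 := rfl

lemma wt_cons (G : GaussDiagram n) (dA : Fin n → ℤ) (d : ℤ) (p : ZMod (2*n)) (mv : Move n)
    (r : List (Move n)) :
    wt G dA d p (mv :: r) = mw G dA d p mv + wt G dA d (G.target p mv) r := rfl

lemma wt_append (G : GaussDiagram n) (dA : Fin n → ℤ) (d : ℤ) (l₁ l₂ : List (Move n))
    (p : ZMod (2*n)) :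
    wt G dA d p (l₁ ++ l₂) = wt G dA d p l₁ + wt G dA d (G.run p l₁) l₂ := by
  induction l₁ generalizing p with
  | nil => simp [wt_nil, GaussDiagram.run]
  | cons m r ih => simp [wt_cons, run_cons, ih, add_assoc]

end StrongAdm
namespace StrongAdm

open GaussDiagram

variable {n : ℕ}

lemma wt_eq [NeZero (2*n)] (G : GaussDiagram n) (dA : Fin n → ℤ) (d : ℤ) :
    ∀ (l : List (Move n)) (p : ZMod (2*n)),
      wt G dA d p l =
        ∑ a, GaussDiagram.netJump l a * (dA a - d * G.arcChain a 0) +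
          d * G.edgeCount p l 0 := by
  intro l
  induction l with
  | nil => intro p; simp [wt_nil, GaussDiagram.netJump, GaussDiagram.edgeCount]
  | cons m r ih =>
    intro p
    cases m with
    | circ =>
      rw [wt_cons, ih]
      simp only [GaussDiagram.netJump, GaussDiagram.edgeCount, GaussDiagram.target, mw]
      rcases eq_or_ne p 0 with h | h
      · simp [h]; ring
      · simp [h, Ne.symm h]
    | jumpHT a =>
      rw [wt_cons, ih]
      simp only [GaussDiagram.netJump, GaussDiagram.edgeCount, GaussDiagram.target, mw]
      have : ∀ b ∈ Finset.univ,
          (GaussDiagram.netJump r b - (if b = a then 1 else 0)) * (dA b - d * G.arcChain b 0)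
          = GaussDiagram.netJump r b * (dA b - d * G.arcChain b 0)
            - (if b = a then (dA b - d * G.arcChain b 0) else 0) := by
        intro b _; rcases eq_or_ne b a with h | h <;> simp [h] <;> ring
      rw [Finset.sum_congr rfl this, Finset.sum_sub_distrib, Finset.sum_ite_eq' Finset.univ a]
      simp; ring
    | jumpTH a =>
      rw [wt_cons, ih]
      simp only [GaussDiagram.netJump, GaussDiagram.edgeCount, GaussDiagram.target, mw]
      have : ∀ b ∈ Finset.univ,
          ((if b = a then 1 else 0) + GaussDiagram.netJump r b) * (dA b - d * G.arcChain b 0)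
          = GaussDiagram.netJump r b * (dA b - d * G.arcChain b 0)
            + (if b = a then (dA b - d * G.arcChain b 0) else 0) := by
        intro b _; rcases eq_or_ne b a with h | h <;> simp [h] <;> ring
      rw [Finset.sum_congr rfl this, Finset.sum_add_distrib, Finset.sum_ite_eq' Finset.univ a]
      simp; ring

lemma loopClass_eq_wt [NeZero (2*n)] (G : GaussDiagram n) (dA : Fin n → ℤ) (d : ℤ)
    (L : GaussDiagram.Loop G) :
    G.loopClass dA d L = wt G dA d L.start L.moves := by
  rw [wt_eq, GaussDiagram.loopClass]
  have : ∀ a ∈ Finset.univ,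
      GaussDiagram.netJump L.moves a * (dA a - d * G.arcChain a 0)
      = GaussDiagram.netJump L.moves a * dA a
        - (GaussDiagram.netJump L.moves a * G.arcChain a 0) * d := by
    intro a _; ring
  rw [Finset.sum_congr rfl this, Finset.sum_sub_distrib, ← Finset.sum_mul]
  ring

end StrongAdm
namespace StrongAdm

open GaussDiagram

variable {n : ℕ}

lemma head_ne_tail (G : GaussDiagram n) (a b : Fin n) : G.head a ≠ G.tail b := by
  intro h
  have := G.inj (a₁ := Sum.inl a) (a₂ := Sum.inr b) (by simpa using h)
  simp at this

lemma jump_cancel (G : GaussDiagram n) {p : ZMod (2*n)} {m₁ m₂ : Move n}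
    (h₁ : mvValid G p m₁) (j₁ : m₁.isJump)
    (h₂ : mvValid G (G.target p m₁) m₂) (j₂ : m₂.isJump) :
    G.target (G.target p m₁) m₂ = p ∧
      ∀ dA d, mw G dA d p m₁ + mw G dA d (G.target p m₁) m₂ = 0 := by
  cases m₁ with
  | circ => simp [Move.isJump] at j₁
  | jumpHT a =>
    cases m₂ with
    | circ => simp [Move.isJump] at j₂
    | jumpHT b =>
      exact absurd h₂.symm (head_ne_tail G b a)
    | jumpTH b =>
      have hab : a = b := by
        have := G.inj (a₁ := Sum.inr a) (a₂ := Sum.inr b) (by simpa using (show G.tail a = G.tail b from h₂))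
        simpa using this
      subst hab
      refine ⟨?_, fun dA d => by simp [mw]⟩
      simp [GaussDiagram.target, mvValid] at h₁ ⊢
      exact h₁.symm
  | jumpTH a =>
    cases m₂ with
    | circ => simp [Move.isJump] at j₂
    | jumpTH b =>
      exact absurd h₂ (head_ne_tail G a b)
    | jumpHT b =>
      have hab : a = b := by
        have := G.inj (a₁ := Sum.inl a) (a₂ := Sum.inl b) (by simpa using (show G.head a = G.head b from h₂))
        simpa using this
      subst hab
      refine ⟨?_, fun dA d => by simp [mw]⟩
      simp [GaussDiagram.target, mvValid] at h₁ ⊢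
      exact h₁.symm

lemma cancel_surgery (G : GaussDiagram n) {p : ZMod (2*n)} {l₁ l₂ : List (Move n)}
    {m₁ m₂ : Move n} (hv : G.validFrom p (l₁ ++ m₁ :: m₂ :: l₂))
    (j₁ : m₁.isJump) (j₂ : m₂.isJump) :
    G.validFrom p (l₁ ++ l₂) ∧ G.run p (l₁ ++ l₂) = G.run p (l₁ ++ m₁ :: m₂ :: l₂) ∧
      ∀ dA d, wt G dA d p (l₁ ++ l₂) = wt G dA d p (l₁ ++ m₁ :: m₂ :: l₂) := by
  rw [validFrom_append] at hv
  obtain ⟨hv₁, hv₂⟩ := hv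
  set q := G.run p l₁ with hq
  rw [validFrom_cons] at hv₂
  obtain ⟨hm₁, hv₂⟩ := hv₂
  rw [validFrom_cons] at hv₂
  obtain ⟨hm₂, hv₂⟩ := hv₂
  obtain ⟨htgt, hwts⟩ := jump_cancel G hm₁ j₁ hm₂ j₂
  rw [htgt] at hv₂
  refine ⟨?_, ?_, ?_⟩
  · rw [validFrom_append]; exact ⟨hv₁, hv₂⟩
  · rw [run_append, run_append, run_cons, run_cons, htgt]
  · intro dA d
    rw [wt_append, wt_append, wt_cons, wt_cons, htgt, ← add_assoc, ← add_assoc,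
      add_assoc (wt G dA d p l₁), hwts dA d, add_zero]

lemma rotate (G : GaussDiagram n) {p : ZMod (2*n)} {m : Move n} {l : List (Move n)}
    (hv : G.validFrom p (m :: l)) (hc : G.run p (m :: l) = p) :
    G.validFrom (G.target p m) (l ++ [m]) ∧
      G.run (G.target p m) (l ++ [m]) = G.target p m ∧
      ∀ dA d, wt G dA d (G.target p m) (l ++ [m]) = wt G dA d p (m :: l) := by
  rw [validFrom_cons] at hv
  obtain ⟨hm, hv⟩ := hv
  rw [run_cons] at hc
  refine ⟨?_, ?_, ?_⟩
  · rw [validFrom_append]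
    exact ⟨hv, by rw [hc, validFrom_cons]; exact ⟨hm, trivial⟩⟩
  · rw [run_append, hc, run_cons]; rfl
  · intro dA d
    rw [wt_append, hc, wt_cons, wt_cons, wt_nil, add_zero, add_comm]

end StrongAdm
namespace StrongAdm

open GaussDiagram

variable {n : ℕ}

lemma not_closed_single_jump (G : GaussDiagram n) {p : ZMod (2*n)} {m : Move n}
    (hv : G.validFrom p [m]) (hc : G.run p [m] = p) (j : m.isJump) : False := by
  cases m with
  | circ => simp [Move.isJump] at j
  | jumpHT a =>
    obtain ⟨hm, -⟩ := (validFrom_cons G p _ _).1 hv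
    have hr : G.tail a = p := hc
    exact head_ne_tail G a a (by rw [← hm, hr, hm])
  | jumpTH a =>
    obtain ⟨hm, -⟩ := (validFrom_cons G p _ _).1 hv
    have hr : G.head a = p := hc
    exact head_ne_tail G a a (by rw [hr, hm])

lemma wt_closed_nonneg [NeZero (2*n)] (G : GaussDiagram n) (dA : Fin n → ℤ) (d : ℤ)
    (hadm : ∀ L : GaussDiagram.Loop G, L.Reduced → 1 ≤ G.loopClass dA d L) :
    ∀ (N : ℕ) (l : List (Move n)) (p : ZMod (2*n)), l.length ≤ N →
      G.validFrom p l → G.run p l = p → 0 ≤ wt G dA d p l := by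
  intro N
  induction N with
  | zero =>
    intro l p hlen _ _
    rw [List.length_eq_zero_iff.1 (Nat.le_zero.1 hlen), wt_nil]
  | succ N ih =>
    intro l p hlen hv hc
    by_cases hpair : ∃ (l₁ : List (Move n)) (m₁ m₂ : Move n) (l₂ : List (Move n)),
        l = l₁ ++ m₁ :: m₂ :: l₂ ∧ m₁.isJump ∧ m₂.isJump
    · obtain ⟨l₁, m₁, m₂, l₂, rfl, j₁, j₂⟩ := hpair
      obtain ⟨hv', hr', hw'⟩ := cancel_surgery G hv j₁ j₂
      rw [← hw' dA d]
      refine ih _ p ?_ hv' (by rw [hr', hc])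
      have := hlen
      simp only [List.length_append, List.length_cons] at this ⊢
      omega
    · have hchain : l.Chain' (fun m₁ m₂ => ¬(m₁.isJump ∧ m₂.isJump)) := by
        rw [show @List.Chain' = @List.IsChain from rfl, List.isChain_iff_getElem]
        intro i hi hcon
        refine hpair ⟨l.take i, l.get ⟨i, by omega⟩, l.get ⟨i+1, by omega⟩, l.drop (i+2), ?_,
          hcon.1, hcon.2⟩
        conv_lhs => rw [← List.take_append_drop i l]
        rw [List.drop_eq_getElem_cons (by omega : i < l.length),
          List.drop_eq_getElem_cons (by omega : i + 1 < l.length)]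
        simp
      by_cases hends : ∃ m₁ ∈ l.getLast?, ∃ m₂ ∈ l.head?, m₁.isJump ∧ m₂.isJump
      · obtain ⟨m₁, hm₁, m₂, hm₂, j₁, j₂⟩ := hends
        cases l with
        | nil => simp at hm₂
        | cons m t =>
        have hm2 : m₂ = m := by simpa using hm₂.symm
        subst hm2
        rcases eq_or_ne t [] with rfl | ht
        · have hm1 : m₁ = m₂ := by simpa using hm₁.symm
          exact absurd (not_closed_single_jump G hv hc (hm1 ▸ j₁)) not_false
        · have hm1 : t.getLast ht = m₁ := by
            have : (m₂ :: t).getLast? = t.getLast? := by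
              cases t with
              | nil => exact absurd rfl ht
              | cons m' t' => exact List.getLast?_cons_cons
            rw [this, List.getLast?_eq_getLast ht] at hm₁
            exact (Option.some_inj.1 hm₁)
          have htd : t = t.dropLast ++ [m₁] := by
            conv_lhs => rw [← List.dropLast_append_getLast ht, hm1]
          obtain ⟨hv', hr', hw'⟩ := rotate G hv hc
          rw [← hw' dA d]
          have hshape : t ++ [m₂] = t.dropLast ++ m₁ :: m₂ :: [] := by
            conv_lhs => rw [htd]
            simp
          rw [hshape] at hv' hr' ⊢
          obtain ⟨hv'', hr'', hw''⟩ := cancel_surgery G hv' j₁ j₂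
          rw [← hw'' dA d]
          refine ih _ _ ?_ hv'' (by rw [hr'', hr'])
          have h1 : (m₂ :: t).length ≤ N + 1 := hlen
          have h2 := List.length_dropLast (xs := t)
          have h3 : t.length ≠ 0 := fun h => ht (List.length_eq_zero_iff.1 h)
          simp only [List.length_cons] at h1
          simp only [List.length_append, List.length_nil]
          omega
      · -- reduced loop
        push_neg at hends
        cases l with
        | nil => rw [wt_nil]
        | cons m t =>
          have hred : (GaussDiagram.Loop.mk p (m :: t) hv hc).Reduced :=
            ⟨by simp, hchain, fun m₁ h₁ m₂ h₂ hj => hends m₁ h₁ m₂ h₂ hj.1 hj.2⟩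
          have := hadm _ hred
          rw [loopClass_eq_wt] at this
          exact le_trans zero_le_one this

end StrongAdm
namespace StrongAdm

open GaussDiagram

variable {n : ℕ}

lemma validFrom_replicate (G : GaussDiagram n) (k : ℕ) (p : ZMod (2*n)) :
    G.validFrom p (List.replicate k Move.circ) := by
  induction k generalizing p with
  | zero => exact trivial
  | succ k ih =>
    rw [List.replicate_succ, validFrom_cons]
    exact ⟨trivial, ih _⟩

lemma run_replicate (G : GaussDiagram n) (k : ℕ) (p : ZMod (2*n)) :
    G.run p (List.replicate k Move.circ) = p + k := by
  induction k generalizing p with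
  | zero => simp [GaussDiagram.run]
  | succ k ih =>
    rw [List.replicate_succ, run_cons, ih]
    show p + 1 + (k : ZMod (2*n)) = p + ((k : ℕ) + 1 : ℕ)
    push_cast
    ring

/-- The set of weights of valid walks from `0` to `q`. -/
def walkSet (G : GaussDiagram n) (dA : Fin n → ℤ) (d : ℤ) (q : ZMod (2*n)) : Set ℤ :=
  {w | ∃ l, G.validFrom 0 l ∧ G.run 0 l = q ∧ wt G dA d 0 l = w}

lemma walkSet_nonempty [NeZero (2*n)] (G : GaussDiagram n) (dA : Fin n → ℤ) (d : ℤ)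
    (q : ZMod (2*n)) : (walkSet G dA d q).Nonempty := by
  refine ⟨_, List.replicate q.val Move.circ, validFrom_replicate G _ _, ?_, rfl⟩
  rw [run_replicate, zero_add, ZMod.natCast_rightInverse q]

lemma walkSet_bddBelow [NeZero (2*n)] (G : GaussDiagram n) (dA : Fin n → ℤ) (d : ℤ)
    (hadm : ∀ L : GaussDiagram.Loop G, L.Reduced → 1 ≤ G.loopClass dA d L)
    (q : ZMod (2*n)) : BddBelow (walkSet G dA d q) := by
  refine ⟨-wt G dA d q (List.replicate (2*n - q.val) Move.circ), ?_⟩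
  rintro w ⟨l, hv, hr, rfl⟩
  set r := List.replicate (2*n - q.val) Move.circ with hrdef
  have hrun : G.run q r = 0 := by
    rw [hrdef, run_replicate]
    have hq : q.val < 2*n := ZMod.val_lt q
    have : ((q.val + (2*n - q.val) : ℕ) : ZMod (2*n)) = q + ((2*n - q.val : ℕ) : ZMod (2*n)) := by
      rw [Nat.cast_add, ZMod.natCast_rightInverse q]
    rw [← this, Nat.add_sub_cancel' (le_of_lt hq)]
    exact ZMod.natCast_self (2*n)
  have hclosed : G.run 0 (l ++ r) = 0 := by rw [run_append, hr, hrun]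
  have hvalid : G.validFrom 0 (l ++ r) := by
    rw [validFrom_append, hr]
    exact ⟨hv, validFrom_replicate G _ _⟩
  have := wt_closed_nonneg G dA d hadm (l ++ r).length (l ++ r) 0 le_rfl hvalid hclosed
  rw [wt_append, hr] at this
  linarith

/-- The potential function: least weight of a valid walk from `0` to `q`. -/
noncomputable def fpot (G : GaussDiagram n) (dA : Fin n → ℤ) (d : ℤ) (q : ZMod (2*n)) : ℤ :=
  sInf (walkSet G dA d q)

lemma fpot_mem [NeZero (2*n)] (G : GaussDiagram n) (dA : Fin n → ℤ) (d : ℤ)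
    (hadm : ∀ L : GaussDiagram.Loop G, L.Reduced → 1 ≤ G.loopClass dA d L)
    (q : ZMod (2*n)) : fpot G dA d q ∈ walkSet G dA d q :=
  Int.csInf_mem (walkSet_nonempty G dA d q) (walkSet_bddBelow G dA d hadm q)

lemma fpot_le [NeZero (2*n)] (G : GaussDiagram n) (dA : Fin n → ℤ) (d : ℤ)
    (hadm : ∀ L : GaussDiagram.Loop G, L.Reduced → 1 ≤ G.loopClass dA d L)
    {q : ZMod (2*n)} {w : ℤ} (hw : w ∈ walkSet G dA d q) : fpot G dA d q ≤ w :=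
  csInf_le (walkSet_bddBelow G dA d hadm q) hw

lemma fpot_step [NeZero (2*n)] (G : GaussDiagram n) (dA : Fin n → ℤ) (d : ℤ)
    (hadm : ∀ L : GaussDiagram.Loop G, L.Reduced → 1 ≤ G.loopClass dA d L)
    (q : ZMod (2*n)) (mv : Move n) (hmv : mvValid G q mv) :
    fpot G dA d (G.target q mv) ≤ fpot G dA d q + mw G dA d q mv := by
  obtain ⟨l, hv, hr, hw⟩ := fpot_mem G dA d hadm q
  refine fpot_le G dA d hadm ⟨l ++ [mv], ?_, ?_, ?_⟩
  · rw [validFrom_append, hr, validFrom_cons]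
    exact ⟨hv, hmv, trivial⟩
  · rw [run_append, hr, run_cons]; rfl
  · rw [wt_append, hr, hw, wt_cons, wt_nil, add_zero]

lemma fpot_jump [NeZero (2*n)] (G : GaussDiagram n) (dA : Fin n → ℤ) (d : ℤ)
    (hadm : ∀ L : GaussDiagram.Loop G, L.Reduced → 1 ≤ G.loopClass dA d L)
    (a : Fin n) :
    fpot G dA d (G.head a) = fpot G dA d (G.tail a) + (dA a - d * G.arcChain a 0) := by
  have h1 := fpot_step G dA d hadm (G.head a) (Move.jumpHT a) rfl
  have h2 := fpot_step G dA d hadm (G.tail a) (Move.jumpTH a) rfl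
  simp only [GaussDiagram.target, mw] at h1 h2
  omega

end StrongAdm
namespace StrongAdm

open GaussDiagram

variable {n : ℕ}

lemma sum_zmod_ite [NeZero (2*n)] (k : ℕ) (hk : k ≤ 2*n) (g : ZMod (2*n) → ℤ) :
    ∑ u : ZMod (2*n), (if u.val < k then g u else 0) = ∑ j ∈ Finset.range k, g (j : ZMod (2*n)) := by
  rw [← Finset.sum_filter]
  refine Finset.sum_nbij' (fun u => u.val) (fun j => (j : ZMod (2*n))) ?_ ?_ ?_ ?_ ?_
  · intro u hu
    simp only [Finset.mem_filter] at hu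
    exact Finset.mem_range.2 hu.2
  · intro j hj
    rw [Finset.mem_range] at hj
    simp only [Finset.mem_filter, Finset.mem_univ, true_and]
    rw [ZMod.val_cast_of_lt (lt_of_lt_of_le hj hk)]
    exact hj
  · intro u _; exact ZMod.natCast_rightInverse u
  · intro j hj
    rw [Finset.mem_range] at hj
    exact ZMod.val_cast_of_lt (lt_of_lt_of_le hj hk)
  · intro u _
    rw [ZMod.natCast_rightInverse u]

lemma telescope [NeZero (2*n)] (f : ZMod (2*n) → ℤ) (h : ZMod (2*n)) (k : ℕ) :
    ∑ j ∈ Finset.range k, (f (h + (j : ZMod (2*n))) - f (h + (j : ZMod (2*n)) + 1))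
      = f h - f (h + (k : ZMod (2*n))) := by
  have := Finset.sum_range_sub' (fun j : ℕ => f (h + (j : ZMod (2*n)))) k
  simp only [Nat.cast_zero, add_zero] at this
  rw [← this]
  refine Finset.sum_congr rfl fun j _ => ?_
  have : h + ((j : ℕ) + 1 : ℕ) = h + (j : ZMod (2*n)) + 1 := by push_cast; ring
  rw [this]

lemma wt_le_of_not_meets [NeZero (2*n)] (G : GaussDiagram n) (dA : Fin n → ℤ) (d : ℤ)
    (f : ZMod (2*n) → ℤ)
    (hjump : ∀ a, f (G.head a) = f (G.tail a) + (dA a - d * G.arcChain a 0))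
    (m : ZMod (2*n) → ℕ)
    (hz : ∀ p, m p = 0 → f (p + 1) = f p + (if p = 0 then d else 0)) :
    ∀ (l : List (Move n)) (p : ZMod (2*n)), G.validFrom p l → ¬ G.meetsFrom m p l →
      wt G dA d p l ≤ f (G.run p l) - f p := by
  intro l
  induction l with
  | nil => intro p _ _; simp [wt_nil, GaussDiagram.run]
  | cons mv r ih =>
    intro p hv hm
    obtain ⟨hmv, hv'⟩ := (validFrom_cons G p mv r).1 hv
    cases mv with
    | circ =>
      have hm' : ¬(0 < m p ∨ G.meetsFrom m (p + 1) r) := hm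
      push_neg at hm'
      have hz' := hz p (Nat.le_zero.1 hm'.1)
      have := ih (p + 1) hv' hm'.2
      rw [wt_cons, run_cons]
      show mw G dA d p Move.circ + wt G dA d (p+1) r ≤ f (G.run (p+1) r) - f p
      have hmw : mw G dA d p Move.circ = if p = 0 then d else 0 := rfl
      omega
    | jumpHT a =>
      have hp : p = G.head a := hmv
      have := ih (G.tail a) hv' hm
      rw [wt_cons, run_cons]
      show mw G dA d p (Move.jumpHT a) + wt G dA d (G.tail a) r
        ≤ f (G.run (G.tail a) r) - f p
      have hmw : mw G dA d p (Move.jumpHT a) = -(dA a - d * G.arcChain a 0) := rfl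
      rw [hmw, hp, hjump a]
      omega
    | jumpTH a =>
      have hp : p = G.tail a := hmv
      have := ih (G.head a) hv' hm
      rw [wt_cons, run_cons]
      show mw G dA d p (Move.jumpTH a) + wt G dA d (G.head a) r
        ≤ f (G.run (G.head a) r) - f p
      have hmw : mw G dA d p (Move.jumpTH a) = dA a - d * G.arcChain a 0 := rfl
      rw [hmw, hp]
      have hj := hjump a
      omega

lemma not_meetsFrom_zero (G : GaussDiagram n) (m : ZMod (2*n) → ℕ) (hm : ∀ p, m p = 0) :
    ∀ (l : List (Move n)) (p : ZMod (2*n)), ¬ G.meetsFrom m p l := by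
  intro l
  induction l with
  | nil => intro p h; exact h
  | cons mv r ih =>
    intro p h
    cases mv with
    | circ =>
      rcases h with h | h
      · rw [hm p] at h; exact absurd h (lt_irrefl 0)
      · exact ih _ h
    | jumpHT a => exact ih _ h
    | jumpTH a => exact ih _ h

lemma mem_getLast?_replicate {α : Type*} {a b : α} {k : ℕ}
    (h : b ∈ (List.replicate k a).getLast?) : b = a := by
  rcases List.mem_getLast?_eq_getLast h with ⟨h', rfl⟩
  exact List.eq_of_mem_replicate (List.getLast_mem h')

end StrongAdm
/-- An admissible decorated Gauss diagram (every nontrivial orientation-respecting loop has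
homology class `≥ 1`) has a positive refinement: non-negative markings, not all zero, realizing
all valuations, which moreover are met by every nontrivial orientation-respecting loop. -/
theorem stmt14 (n : ℕ) [NeZero (2 * n)] (G : GaussDiagram n) (dA : Fin n → ℤ) (d : ℤ)
    (hadm : ∀ L : GaussDiagram.Loop G, L.Reduced → 1 ≤ G.loopClass dA d L) :
    ∃ y : ZMod (2 * n) → ℤ, G.IsRefinement dA d y ∧ (∀ e, 0 ≤ y e) ∧ y ≠ 0 ∧
      ∀ L : GaussDiagram.Loop G, L.Reduced → L.Meets (fun e => (y e).toNat) := by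
  classical
  set f : ZMod (2*n) → ℤ := StrongAdm.fpot G dA d with hf
  set y : ZMod (2*n) → ℤ := fun e => f e + (if e = 0 then d else 0) - f (e + 1) with hy
  have hstep : ∀ e : ZMod (2*n), f (e + 1) ≤ f e + (if e = 0 then d else 0) := by
    intro e
    exact StrongAdm.fpot_step G dA d hadm e Move.circ trivial
  have hynn : ∀ e, 0 ≤ y e := by
    intro e
    have := hstep e
    simp only [hy]
    omega
  have hjump : ∀ a, f (G.head a) = f (G.tail a) + (dA a - d * G.arcChain a 0) :=
    StrongAdm.fpot_jump G dA d hadm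
  -- the arc sums
  have harc : ∀ a, ∑ e, G.arcChain a e * y e = dA a := by
    intro a
    have hkle : ((G.tail a - G.head a).val) ≤ 2*n := le_of_lt (ZMod.val_lt _)
    have hstep1 : ∑ e, G.arcChain a e * y e
        = ∑ u : ZMod (2*n), (if u.val < (G.tail a - G.head a).val then y (G.head a + u) else 0) := by
      refine (Fintype.sum_equiv (Equiv.addLeft (G.head a)) _ _ ?_).symm
      intro u
      show (if u.val < (G.tail a - G.head a).val then y (G.head a + u) else 0)
        = G.arcChain a (G.head a + u) * y (G.head a + u)
      rw [GaussDiagram.arcChain]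
      simp only [add_sub_cancel_left]
      rcases lt_or_ge u.val (G.tail a - G.head a).val with hlt | hge
      · simp [hlt]
      · simp [not_lt.2 hge]
    rw [hstep1, StrongAdm.sum_zmod_ite _ hkle]
    have hsplit : ∀ j ∈ Finset.range (G.tail a - G.head a).val,
        y (G.head a + (j : ZMod (2*n)))
        = (f (G.head a + (j : ZMod (2*n))) - f (G.head a + (j : ZMod (2*n)) + 1))
          + (if G.head a + (j : ZMod (2*n)) = 0 then d else 0) := by
      intro j _
      simp only [hy]
      ring
    rw [Finset.sum_congr rfl hsplit, Finset.sum_add_distrib, StrongAdm.telescope]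
    have hcast : G.head a + ((G.tail a - G.head a).val : ZMod (2*n)) = G.tail a := by
      rw [ZMod.natCast_rightInverse (G.tail a - G.head a)]
      ring
    rw [hcast]
    have hite : ∑ j ∈ Finset.range (G.tail a - G.head a).val,
        (if G.head a + (j : ZMod (2*n)) = 0 then d else 0)
        = d * G.arcChain a 0 := by
      have hcond : ∀ j ∈ Finset.range (G.tail a - G.head a).val,
          (if G.head a + (j : ZMod (2*n)) = 0 then d else 0)
          = (if j = (-(G.head a)).val then d else 0) := by
        intro j hj
        rw [Finset.mem_range] at hj
        have hj2 : j < 2*n := lt_of_lt_of_le hj hkle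
        congr 1
        refine propext ⟨fun hzero => ?_, fun hval => ?_⟩
        · have : (j : ZMod (2*n)) = -(G.head a) := by
            have := eq_neg_of_add_eq_zero_right hzero
            exact this
          rw [← this, ZMod.val_cast_of_lt hj2]
        · rw [hval, ZMod.natCast_rightInverse (-(G.head a))]
          ring
      rw [Finset.sum_congr rfl hcond, Finset.sum_ite_eq' (Finset.range _) ((-(G.head a)).val)]
      rw [GaussDiagram.arcChain, zero_sub]
      rcases lt_or_ge (-(G.head a)).val (G.tail a - G.head a).val with hlt | hge
      · simp [Finset.mem_range.2 hlt, hlt]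
      · rw [if_neg (fun hmem => (not_lt.2 hge) (Finset.mem_range.1 hmem)),
          if_neg (not_lt.2 hge), mul_zero]
    rw [hite]
    have := hjump a
    omega
  -- total sum
  have htot : ∑ e, y e = d := by
    have h1 : ∑ e : ZMod (2*n), (f e - f (e + 1)) = 0 := by
      have : ∑ e : ZMod (2*n), f (e + 1) = ∑ e : ZMod (2*n), f e := by
        refine Fintype.sum_equiv (Equiv.addRight 1) _ _ ?_
        intro u; rfl
      rw [Finset.sum_sub_distrib, this, sub_self]
    have h2 : ∑ e : ZMod (2*n), (if e = 0 then d else 0) = d := by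
      rw [Finset.sum_ite_eq' Finset.univ (0 : ZMod (2*n))]
      simp
    calc ∑ e, y e = ∑ e : ZMod (2*n), ((f e - f (e + 1)) + (if e = 0 then d else 0)) := by
          refine Finset.sum_congr rfl fun e _ => ?_
          simp only [hy]; ring
      _ = 0 + d := by rw [Finset.sum_add_distrib, h1, h2]
      _ = d := by ring
  -- meets
  have hmeets : ∀ L : GaussDiagram.Loop G, L.Reduced → L.Meets (fun e => (y e).toNat) := by
    intro L hL
    by_contra hM
    have hz : ∀ p, (fun e => (y e).toNat) p = 0 → f (p + 1) = f p + (if p = 0 then d else 0) := by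
      intro p hp
      simp only at hp
      have h0 : y p = 0 := le_antisymm (by omega) (hynn p)
      have : f p + (if p = 0 then d else 0) - f (p + 1) = 0 := h0
      omega
    have hle := StrongAdm.wt_le_of_not_meets G dA d f hjump _ hz L.moves L.start L.valid hM
    rw [L.closed, sub_self] at hle
    have := hadm L hL
    rw [StrongAdm.loopClass_eq_wt] at this
    omega
  -- nonzero
  have hne : y ≠ 0 := by
    intro h0
    have hv0 : G.validFrom 0 (List.replicate (2*n) Move.circ) :=
      StrongAdm.validFrom_replicate G _ _
    have hc0 : G.run 0 (List.replicate (2*n) Move.circ) = 0 := by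
      rw [StrongAdm.run_replicate, ZMod.natCast_self, add_zero]
    have hred : (GaussDiagram.Loop.mk 0 (List.replicate (2*n) Move.circ) hv0 hc0).Reduced := by
      refine ⟨?_, ?_, ?_⟩
      · show List.replicate (2*n) Move.circ ≠ []
        intro hnil
        have := congrArg List.length hnil
        simp at this
        exact (NeZero.ne (2*n)) (by omega)
      · show (List.replicate (2*n) Move.circ).Chain' _
        rw [show @List.Chain' = @List.IsChain from rfl, List.isChain_iff_getElem]
        intro i hi
        simp only [List.getElem_replicate]
        simp [Move.isJump]
      · intro m₁ h₁ m₂ h₂ hj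
        have hm1 : m₁ = Move.circ := StrongAdm.mem_getLast?_replicate h₁
        rw [hm1] at hj
        simp [Move.isJump] at hj
    have := hmeets _ hred
    exact StrongAdm.not_meetsFrom_zero G _ (fun p => by rw [h0]; rfl)
      (List.replicate (2*n) Move.circ) 0 this
  exact ⟨y, ⟨harc, htot⟩, hynn, hne, hmeets⟩
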